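/- arXiv:1702.07555 — 5 statements merged into one kernel-verified Lean document; each statement's English description precedes it below -/
import Mathlib

section
/- Let ℓ₁ be a horizontal line and ℓ₂ a vertical line in the plane, dividing the plane into four open quadrants. Let e = (p,q) be a segment with p in the bottom-left quadrant and q in the top-right quadrant, and let f = (r,s) be a segment with r in the bottom-right quadrant and s in the top-left quadrant. Assume the supporting lines of e and f are not parallel and no three of p,q,r,s are collinear. Then either e and f cross, or e stabs f, or f stabs e; they are never parallel. -/
/-- The line { p | a x + b y = c } given by a triple (a, b, c). -/
def lineOf (l : ℝ × ℝ × ℝ) : Set (ℝ × ℝ) :=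
  {p | l.1 * p.1 + l.2.1 * p.2 = l.2.2}

/-- Signed side value of a point with respect to a line (a, b, c). -/
def sideVal (l : ℝ × ℝ × ℝ) (p : ℝ × ℝ) : ℝ :=
  l.1 * p.1 + l.2.1 * p.2 - l.2.2

/-- The union of the lines of an arrangement. -/
def linesUnion (S : Finset (ℝ × ℝ × ℝ)) : Set (ℝ × ℝ) :=
  ⋃ l ∈ S, lineOf l

/-- An unbounded region of a line arrangement: an unbounded connected component
of the complement of the union of the lines. -/
def IsUnboundedRegion (S : Finset (ℝ × ℝ × ℝ)) (U : Set (ℝ × ℝ)) : Prop :=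
  (∃ p ∈ (linesUnion S)ᶜ, U = connectedComponentIn (linesUnion S)ᶜ p) ∧
  ¬ Bornology.IsBounded U

/-- A spoke set for P: a set of pairwise non-parallel lines such that every
unbounded region of the arrangement contains a point of P. -/
def SpokeSet (P : Finset (ℝ × ℝ)) (S : Finset (ℝ × ℝ × ℝ)) : Prop :=
  (∀ l ∈ S, (l.1, l.2.1) ≠ (0, 0)) ∧
  (∀ l ∈ S, ∀ m ∈ S, l ≠ m → l.1 * m.2.1 - l.2.1 * m.1 ≠ 0) ∧
  (∀ U, IsUnboundedRegion S U → ∃ p ∈ P, (p : ℝ × ℝ) ∈ U)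

/-- General position: no three distinct points collinear. -/
def GenPos (P : Set (ℝ × ℝ)) : Prop :=
  ∀ p ∈ P, ∀ q ∈ P, ∀ r ∈ P, p ≠ q → p ≠ r → q ≠ r → ¬ Collinear ℝ {p, q, r}

/-- A avoids B: no line through two distinct points of A meets the convex hull of B. -/
def Avoids (A B : Finset (ℝ × ℝ)) : Prop :=
  ∀ a₁ ∈ A, ∀ a₂ ∈ A, a₁ ≠ a₂ →
    ∀ x ∈ (affineSpan ℝ {a₁, a₂} : Set (ℝ × ℝ)), x ∉ convexHull ℝ (B : Set (ℝ × ℝ))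

/-- A and B can be separated by a line (A strictly on one side, B on the other). -/
def SeparatedByLine (A B : Finset (ℝ × ℝ)) : Prop :=
  ∃ l : ℝ × ℝ × ℝ, (l.1, l.2.1) ≠ (0, 0) ∧
    (∀ a ∈ A, sideVal l a < 0) ∧ (∀ b ∈ B, 0 < sideVal l b)

/-- The supporting line of the segment from p to q. -/
def suppLine (p q : ℝ × ℝ) : Set (ℝ × ℝ) := (affineSpan ℝ {p, q} : Set (ℝ × ℝ))

/-- Two segments cross: the (unique) intersection point of their supporting
lines lies in both segments. -/
def SegCross (p₁ p₂ q₁ q₂ : ℝ × ℝ) : Prop :=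
  ∃ s, suppLine p₁ p₂ ∩ suppLine q₁ q₂ = {s} ∧
    s ∈ segment ℝ p₁ p₂ ∧ s ∈ segment ℝ q₁ q₂

/-- The segment (p₁,p₂) stabs the segment (q₁,q₂): the intersection point of the
supporting lines lies in (q₁,q₂) but not in (p₁,p₂). -/
def SegStabs (p₁ p₂ q₁ q₂ : ℝ × ℝ) : Prop :=
  ∃ s, suppLine p₁ p₂ ∩ suppLine q₁ q₂ = {s} ∧
    s ∈ segment ℝ q₁ q₂ ∧ s ∉ segment ℝ p₁ p₂

/-- Two segments are parallel: every common point of the supporting lines lies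
in neither segment (this also covers parallel supporting lines). -/
def SegParallel (p₁ p₂ q₁ q₂ : ℝ × ℝ) : Prop :=
  ∀ s ∈ suppLine p₁ p₂ ∩ suppLine q₁ q₂,
    s ∉ segment ℝ p₁ p₂ ∧ s ∉ segment ℝ q₁ q₂

/-- v is the stabbing vertex of (p₁,p₂) with respect to (q₁,q₂): (p₁,p₂) stabs
(q₁,q₂) and v is the endpoint of (p₁,p₂) closer to the intersection point. -/
def StabVertex (p₁ p₂ q₁ q₂ v : ℝ × ℝ) : Prop :=
  ∃ s, suppLine p₁ p₂ ∩ suppLine q₁ q₂ = {s} ∧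
    s ∈ segment ℝ q₁ q₂ ∧ s ∉ segment ℝ p₁ p₂ ∧
    ((v = p₁ ∧ dist p₁ s ≤ dist p₂ s) ∨ (v = p₂ ∧ dist p₂ s ≤ dist p₁ s))

/-- Two unbounded regions are antipodal: they lie strictly on opposite sides
of every line of the arrangement. -/
def AntipodalRegions (S : Finset (ℝ × ℝ × ℝ)) (U V : Set (ℝ × ℝ)) : Prop :=
  IsUnboundedRegion S U ∧ IsUnboundedRegion S V ∧
  ∀ l ∈ S, ∀ u ∈ U, ∀ v ∈ V, sideVal l u * sideVal l v < 0

/-- The endpoints of the edges of a matching. -/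
noncomputable def endpoints (M : Finset ((ℝ × ℝ) × (ℝ × ℝ))) : Finset (ℝ × ℝ) :=
  M.image Prod.fst ∪ M.image Prod.snd

/-- M is the spoke matching of the spoke set S for P: its endpoints are points
of P, each unbounded region of the arrangement of S contains exactly one
endpoint of M, and each edge of M joins points in antipodal regions. -/
def SpokeMatching (P : Finset (ℝ × ℝ)) (S : Finset (ℝ × ℝ × ℝ))
    (M : Finset ((ℝ × ℝ) × (ℝ × ℝ))) : Prop :=
  SpokeSet P S ∧
  (∀ e ∈ M, e.1 ∈ P ∧ e.2 ∈ P) ∧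
  (∀ U, IsUnboundedRegion S U → ∃! p, p ∈ endpoints M ∧ p ∈ U) ∧
  (∀ e ∈ M, ∃ U V, AntipodalRegions S U V ∧ e.1 ∈ U ∧ e.2 ∈ V)


lemma smul_coord (a : ℝ) (v x : ℝ × ℝ) : a • v + x = (a * v.1 + x.1, a * v.2 + x.2) := by
  apply Prod.ext <;> simp

lemma collinear_of_det3 {x y z : ℝ × ℝ}
    (h : (y.1 - x.1) * (z.2 - x.2) - (y.2 - x.2) * (z.1 - x.1) = 0) :
    Collinear ℝ ({x, y, z} : Set (ℝ × ℝ)) := by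
  by_cases hxy : y = x
  · subst hxy
    exact (collinear_pair ℝ y z).subset (by intro a ha; simp at ha ⊢; tauto)
  · rw [collinear_iff_of_mem (Set.mem_insert x _)]
    refine ⟨y - x, ?_⟩
    intro w hw
    simp only [Set.mem_insert_iff, Set.mem_singleton_iff] at hw
    rcases hw with rfl | rfl | rfl
    · exact ⟨0, by simp⟩
    · exact ⟨1, by simp⟩
    · by_cases h1 : y.1 = x.1
      · have h2 : y.2 - x.2 ≠ 0 := by
          intro h2; exact hxy (Prod.ext h1 (by linarith))
        refine ⟨(w.2 - x.2) / (y.2 - x.2), ?_⟩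
        have hz1 : w.1 = x.1 := by
          have h0 : (y.2 - x.2) * (w.1 - x.1) = 0 := by rw [h1] at h; linarith
          rcases mul_eq_zero.mp h0 with h' | h'
          · exact absurd h' h2
          · linarith
        show w = _ • (y - x) + x
        rw [smul_coord]
        apply Prod.ext
        · show w.1 = _ * (y - x).1 + x.1
          simp [h1, hz1]
        · show w.2 = _ * (y - x).2 + x.2
          simp only [Prod.snd_sub]
          field_simp
          ring
      · have h1' : y.1 - x.1 ≠ 0 := sub_ne_zero.mpr h1
        refine ⟨(w.1 - x.1) / (y.1 - x.1), ?_⟩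
        show w = _ • (y - x) + x
        rw [smul_coord]
        apply Prod.ext
        · show w.1 = _ * (y - x).1 + x.1
          simp only [Prod.fst_sub]
          field_simp
          ring
        · show w.2 = _ * (y - x).2 + x.2
          simp only [Prod.snd_sub]
          rw [div_mul_eq_mul_div, eq_comm, div_add' _ _ _ h1', div_eq_iff h1']
          linear_combination -h

lemma in_Ioo_of_neg {A B v : ℝ} (h : (1 - v) * A + v * B = 0) (hAB : A * B < 0) :
    0 < v ∧ v < 1 := by
  have hA : A ≠ 0 := by rintro rfl; simp at hAB
  have hB : B ≠ 0 := by rintro rfl; simp at hAB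
  have hA2 : 0 < A * A := mul_self_pos.mpr hA
  have hB2 : 0 < B * B := mul_self_pos.mpr hB
  have e1 : (1 - v) * (A * A) = -(v * (A * B)) := by linear_combination A * h
  have e2 : v * (B * B) = -((1 - v) * (A * B)) := by linear_combination B * h
  constructor
  · by_contra hv
    push_neg at hv
    nlinarith
  · by_contra hv
    push_neg at hv
    nlinarith

lemma not_in_Icc_of_pos {A B v : ℝ} (hA : A ≠ 0) (hB : B ≠ 0)
    (h : (1 - v) * A + v * B = 0) (hAB : 0 < A * B) : ¬ (0 ≤ v ∧ v ≤ 1) := by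
  rintro ⟨h0, h1⟩
  have key : v * (1 - v) * (A * B) = -((v * B) ^ 2) := by linear_combination (v * B) * h
  rcases h0.eq_or_lt with h0' | h0'
  · rw [← h0'] at h; exact hA (by linarith)
  rcases h1.lt_or_eq with h1' | h1'
  · nlinarith [mul_pos (mul_pos h0' (by linarith : (0:ℝ) < 1 - v)) hAB, sq_nonneg (v * B)]
  · rw [h1'] at h; exact hB (by linarith)


theorem stmt3 (c₁ c₂ : ℝ) (p q r s : ℝ × ℝ)
    (hp : p.1 < c₂ ∧ p.2 < c₁) (hq : c₂ < q.1 ∧ c₁ < q.2)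
    (hr : c₂ < r.1 ∧ r.2 < c₁) (hs : s.1 < c₂ ∧ c₁ < s.2)
    (hgp : GenPos {p, q, r, s})
    (t : ℝ × ℝ) (ht : suppLine p q ∩ suppLine r s = {t}) :
    (t ∈ openSegment ℝ p q ∧ t ∈ openSegment ℝ r s) ∨
    (t ∈ segment ℝ r s ∧ t ∉ segment ℝ p q) ∨
    (t ∈ segment ℝ p q ∧ t ∉ segment ℝ r s) := by
  obtain ⟨hp1, hp2⟩ := hp
  obtain ⟨hq1, hq2⟩ := hq
  obtain ⟨hr1, hr2⟩ := hr
  obtain ⟨hs1, hs2⟩ := hs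
  -- distinctness
  have hpq : p ≠ q := fun h => by rw [h] at hp1; linarith
  have hpr : p ≠ r := fun h => by rw [h] at hp1; linarith
  have hps : p ≠ s := fun h => by rw [h] at hp2; linarith
  have hqr : q ≠ r := fun h => by rw [h] at hq2; linarith
  have hqs : q ≠ s := fun h => by rw [h] at hq1; linarith
  have hrs : r ≠ s := fun h => by rw [h] at hr1; linarith
  -- determinants
  set A := (q.1 - p.1) * (r.2 - p.2) - (q.2 - p.2) * (r.1 - p.1) with hAdef
  set B := (q.1 - p.1) * (s.2 - p.2) - (q.2 - p.2) * (s.1 - p.1) with hBdef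
  set C := (s.1 - r.1) * (p.2 - r.2) - (s.2 - r.2) * (p.1 - r.1) with hCdef
  set E := (s.1 - r.1) * (q.2 - r.2) - (s.2 - r.2) * (q.1 - r.1) with hEdef
  have hA0 : A ≠ 0 := fun h =>
    hgp p (by simp) q (by simp) r (by simp) hpq hpr hqr (collinear_of_det3 h)
  have hB0 : B ≠ 0 := fun h =>
    hgp p (by simp) q (by simp) s (by simp) hpq hps hqs (collinear_of_det3 h)
  have hC0 : C ≠ 0 := fun h =>
    hgp r (by simp) s (by simp) p (by simp) hrs (Ne.symm hpr) (Ne.symm hps) (collinear_of_det3 h)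
  have hE0 : E ≠ 0 := fun h =>
    hgp r (by simp) s (by simp) q (by simp) hrs (Ne.symm hqr) (Ne.symm hqs) (collinear_of_det3 h)
  clear_value A B C E
  -- t lies on both lines
  have htm : t ∈ suppLine p q ∩ suppLine r s := ht ▸ rfl
  obtain ⟨ht1, ht2⟩ := htm
  obtain ⟨u, hu'⟩ := vadd_left_mem_affineSpan_pair.mp
    (show (t -ᵥ p) +ᵥ p ∈ affineSpan ℝ {p, q} by simpa [suppLine] using ht1)
  have hu : u • (q - p) = t - p := by simpa [vsub_eq_sub] using hu'
  obtain ⟨v, hv'⟩ := vadd_left_mem_affineSpan_pair.mp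
    (show (t -ᵥ r) +ᵥ r ∈ affineSpan ℝ {r, s} by simpa [suppLine] using ht2)
  have hv : v • (s - r) = t - r := by simpa [vsub_eq_sub] using hv'
  have hu1 : u * (q.1 - p.1) = t.1 - p.1 := by
    have := congrArg Prod.fst hu; simpa using this
  have hu2 : u * (q.2 - p.2) = t.2 - p.2 := by
    have := congrArg Prod.snd hu; simpa using this
  have hv1 : v * (s.1 - r.1) = t.1 - r.1 := by
    have := congrArg Prod.fst hv; simpa using this
  have hv2 : v * (s.2 - r.2) = t.2 - r.2 := by
    have := congrArg Prod.snd hv; simpa using this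
  -- key affine relations
  have keyu : (1 - u) * C + u * E = 0 := by
    rw [hCdef, hEdef]
    linear_combination (s.1 - r.1) * hu2 - (s.2 - r.2) * hu1
      + (s.1 - r.1) * hv2 * 0 - ((s.1 - r.1) * hv2 - (s.2 - r.2) * hv1)
  have keyv : (1 - v) * A + v * B = 0 := by
    rw [hAdef, hBdef]
    linear_combination (q.1 - p.1) * hv2 - (q.2 - p.2) * hv1
      - ((q.1 - p.1) * hu2 - (q.2 - p.2) * hu1)
  -- sign facts
  have f1 : A < 0 ∨ 0 < C := by
    rcases le_or_gt r.2 p.2 with hc | hc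
    · left
      rw [hAdef]
      linarith [mul_pos (by linarith : (0:ℝ) < q.2 - p.2) (by linarith : (0:ℝ) < r.1 - p.1),
        mul_nonneg (by linarith : (0:ℝ) ≤ q.1 - p.1) (by linarith : (0:ℝ) ≤ p.2 - r.2)]
    · right
      rw [hCdef]
      linarith [mul_pos (by linarith : (0:ℝ) < r.1 - s.1) (by linarith : (0:ℝ) < r.2 - p.2),
        mul_pos (by linarith : (0:ℝ) < s.2 - r.2) (by linarith : (0:ℝ) < r.1 - p.1)]
  have f2 : 0 < B ∨ 0 < C := by
    rcases le_or_gt s.1 p.1 with hc | hc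
    · left
      rw [hBdef]
      linarith [mul_pos (by linarith : (0:ℝ) < q.1 - p.1) (by linarith : (0:ℝ) < s.2 - p.2),
        mul_nonneg (by linarith : (0:ℝ) ≤ q.2 - p.2) (by linarith : (0:ℝ) ≤ p.1 - s.1)]
    · right
      rw [hCdef]
      linarith [mul_pos (by linarith : (0:ℝ) < s.2 - c₁) (by linarith : (0:ℝ) < c₂ - p.1),
        mul_pos (by linarith : (0:ℝ) < s.2 - c₁) (by linarith : (0:ℝ) < r.1 - c₂),
        mul_pos (by linarith : (0:ℝ) < c₁ - r.2) (by linarith : (0:ℝ) < s.1 - p.1),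
        mul_pos (by linarith : (0:ℝ) < c₂ - s.1) (by linarith : (0:ℝ) < c₁ - p.2),
        mul_pos (by linarith : (0:ℝ) < r.1 - c₂) (by linarith : (0:ℝ) < c₁ - p.2)]
  have f3 : 0 < B ∨ E < 0 := by
    rcases le_or_gt q.2 s.2 with hc | hc
    · left
      rw [hBdef]
      linarith [mul_nonneg (by linarith : (0:ℝ) ≤ q.1 - p.1) (by linarith : (0:ℝ) ≤ s.2 - q.2),
        mul_pos (by linarith : (0:ℝ) < q.2 - p.2) (by linarith : (0:ℝ) < q.1 - s.1)]
    · right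
      rw [hEdef]
      linarith [mul_pos (by linarith : (0:ℝ) < r.1 - s.1) (by linarith : (0:ℝ) < q.2 - s.2),
        mul_pos (by linarith : (0:ℝ) < s.2 - r.2) (by linarith : (0:ℝ) < q.1 - s.1)]
  have f4 : A < 0 ∨ E < 0 := by
    rcases le_or_gt q.1 r.1 with hc | hc
    · left
      rw [hAdef]
      linarith [mul_pos (by linarith : (0:ℝ) < q.1 - p.1) (by linarith : (0:ℝ) < q.2 - r.2),
        mul_nonneg (by linarith : (0:ℝ) ≤ q.2 - p.2) (by linarith : (0:ℝ) ≤ r.1 - q.1)]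
    · right
      rw [hEdef]
      linarith [mul_pos (by linarith : (0:ℝ) < c₁ - r.2) (by linarith : (0:ℝ) < q.1 - c₂),
        mul_pos (by linarith : (0:ℝ) < c₁ - r.2) (by linarith : (0:ℝ) < c₂ - s.1),
        mul_pos (by linarith : (0:ℝ) < s.2 - c₁) (by linarith : (0:ℝ) < q.1 - r.1),
        mul_pos (by linarith : (0:ℝ) < r.1 - c₂) (by linarith : (0:ℝ) < q.2 - c₁),
        mul_pos (by linarith : (0:ℝ) < c₂ - s.1) (by linarith : (0:ℝ) < q.2 - c₁)]
  -- lineMap descriptions of t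
  have hlinpq : AffineMap.lineMap p q u = t := by
    show u • (q - p) + p = t
    rw [hu]; abel
  have hlinrs : AffineMap.lineMap r s v = t := by
    show v • (s - r) + r = t
    rw [hv]; abel
  have memopenpq : C * E < 0 → t ∈ openSegment ℝ p q := by
    intro h
    rw [openSegment_eq_image_lineMap]
    exact ⟨u, in_Ioo_of_neg keyu h, hlinpq⟩
  have memopenrs : A * B < 0 → t ∈ openSegment ℝ r s := by
    intro h
    rw [openSegment_eq_image_lineMap]
    exact ⟨v, in_Ioo_of_neg keyv h, hlinrs⟩
  have notmempq : 0 < C * E → t ∉ segment ℝ p q := by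
    intro h hmem
    rw [segment_eq_image_lineMap] at hmem
    obtain ⟨u', hu', he⟩ := hmem
    have : u' = u := AffineMap.lineMap_injective ℝ hpq (he.trans hlinpq.symm)
    exact not_in_Icc_of_pos hC0 hE0 keyu h ⟨this ▸ hu'.1, this ▸ hu'.2⟩
  have notmemrs : 0 < A * B → t ∉ segment ℝ r s := by
    intro h hmem
    rw [segment_eq_image_lineMap] at hmem
    obtain ⟨v', hv', he⟩ := hmem
    have : v' = v := AffineMap.lineMap_injective ℝ hrs (he.trans hlinrs.symm)
    exact not_in_Icc_of_pos hA0 hB0 keyv h ⟨this ▸ hv'.1, this ▸ hv'.2⟩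
  -- case analysis
  have hABne : A * B ≠ 0 := mul_ne_zero hA0 hB0
  have hCEne : C * E ≠ 0 := mul_ne_zero hC0 hE0
  rcases lt_or_gt_of_ne hABne with hAB | hAB
  · rcases lt_or_gt_of_ne hCEne with hCE | hCE
    · exact Or.inl ⟨memopenpq hCE, memopenrs hAB⟩
    · exact Or.inr (Or.inl ⟨openSegment_subset_segment ℝ r s (memopenrs hAB), notmempq hCE⟩)
  · rcases lt_or_gt_of_ne hCEne with hCE | hCE
    · exact Or.inr (Or.inr ⟨openSegment_subset_segment ℝ p q (memopenpq hCE), notmemrs hAB⟩)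
    · exfalso
      rcases lt_or_gt_of_ne hA0 with hA | hA
      · have hB : B < 0 := by
          rcases lt_or_gt_of_ne hB0 with h | h
          · exact h
          · exact absurd (mul_neg_of_neg_of_pos hA h) (by linarith)
        have hC : 0 < C := f2.resolve_left (by linarith)
        have hE : E < 0 := f3.resolve_left (by linarith)
        exact absurd (mul_neg_of_pos_of_neg hC hE) (by linarith)
      · have hB : 0 < B := by
          rcases lt_or_gt_of_ne hB0 with h | h
          · exact absurd (mul_neg_of_pos_of_neg hA h) (by linarith)
          · exact h
        have hC : 0 < C := f1.resolve_left (by linarith)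
        have hE : E < 0 := f4.resolve_left (by linarith)
        exact absurd (mul_neg_of_pos_of_neg hC hE) (by linarith)
end

section
/- An arrangement of k pairwise non-parallel lines in the plane has exactly 2k unbounded regions, and ordering the lines ℓ₁,…,ℓ_k by increasing slope, the unbounded regions can be labeled U⁺_i (below ℓ₁,…,ℓ_i and above ℓ_{i+1},…,ℓ_k) and U⁻_i (above ℓ₁,…,ℓ_i and below ℓ_{i+1},…,ℓ_k) for 0 ≤ i ≤ k−1, and all of these 2k regions are nonempty and pairwise distinct. -/
open Set Filter

namespace Stmt8Aux

variable {k : ℕ}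

/-- The open cell of a sign vector. -/
def cellOf (m b : Fin k → ℝ) (ε : Fin k → Bool) : Set (ℝ × ℝ) :=
  {p | ∀ j, if ε j then m j * p.1 + b j < p.2 else p.2 < m j * p.1 + b j}

lemma convex_above (c d : ℝ) : Convex ℝ {p : ℝ × ℝ | c * p.1 + d < p.2} := by
  have h : IsLinearMap ℝ (fun p : ℝ × ℝ => c * p.1 - p.2) :=
    ⟨fun x y => by simp [Prod.fst_add, Prod.snd_add]; ring,
     fun r x => by simp [Prod.smul_fst, Prod.smul_snd, smul_eq_mul]; ring⟩
  have h2 := convex_halfSpace_lt h (-d)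
  convert h2 using 1
  · rfl
  ext p; simp only [Set.mem_setOf_eq]; constructor <;> intro <;> linarith

lemma convex_below (c d : ℝ) : Convex ℝ {p : ℝ × ℝ | p.2 < c * p.1 + d} := by
  have h : IsLinearMap ℝ (fun p : ℝ × ℝ => p.2 - c * p.1) :=
    ⟨fun x y => by simp [Prod.fst_add, Prod.snd_add]; ring,
     fun r x => by simp [Prod.smul_fst, Prod.smul_snd, smul_eq_mul]; ring⟩
  have h2 := convex_halfSpace_lt h d
  convert h2 using 1
  · rfl
  ext p; simp only [Set.mem_setOf_eq]; constructor <;> intro <;> linarith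

lemma isOpen_above (c d : ℝ) : IsOpen {p : ℝ × ℝ | c * p.1 + d < p.2} :=
  isOpen_lt (by continuity) continuous_snd

lemma isOpen_below (c d : ℝ) : IsOpen {p : ℝ × ℝ | p.2 < c * p.1 + d} :=
  isOpen_lt continuous_snd (by continuity)

lemma cellOf_eq_iInter (m b : Fin k → ℝ) (ε : Fin k → Bool) :
    cellOf m b ε = ⋂ j, (if ε j then {p : ℝ × ℝ | m j * p.1 + b j < p.2}
      else {p : ℝ × ℝ | p.2 < m j * p.1 + b j}) := by
  ext p
  simp only [cellOf, Set.mem_setOf_eq, Set.mem_iInter]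
  constructor <;> intro h j <;> have := h j <;> cases hε : ε j <;>
    simp [hε] at this ⊢ <;> exact this

lemma cellOf_convex (m b : Fin k → ℝ) (ε : Fin k → Bool) : Convex ℝ (cellOf m b ε) := by
  rw [cellOf_eq_iInter]
  exact convex_iInter fun j => by
    cases hε : ε j <;> simp [hε] <;> [exact convex_below _ _; exact convex_above _ _]

lemma cellOf_isOpen (m b : Fin k → ℝ) (ε : Fin k → Bool) : IsOpen (cellOf m b ε) := by
  rw [cellOf_eq_iInter]
  exact isOpen_iInter_of_finite fun j => by
    cases hε : ε j <;> simp [hε] <;> [exact isOpen_below _ _; exact isOpen_above _ _]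

lemma compl_linesUnion (m b : Fin k → ℝ) (S : Finset (ℝ × ℝ × ℝ))
    (hS : S = Finset.image (fun i : Fin k => (m i, (-1 : ℝ), -(b i))) Finset.univ) :
    (linesUnion S)ᶜ = {p : ℝ × ℝ | ∀ j, p.2 ≠ m j * p.1 + b j} := by
  ext p
  simp only [linesUnion, lineOf, hS, Set.mem_compl_iff, Set.mem_iUnion, Set.mem_setOf_eq,
    Finset.mem_image, Finset.mem_univ, true_and, not_exists, exists_prop]
  constructor
  · intro h j hj
    exact h _ ⟨⟨j, rfl⟩, by simp; linarith⟩
  · rintro h l ⟨⟨j, rfl⟩, hl⟩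
    simp at hl
    exact h j (by linarith)

lemma cellOf_subset_compl (m b : Fin k → ℝ) (ε : Fin k → Bool) :
    cellOf m b ε ⊆ {p : ℝ × ℝ | ∀ j, p.2 ≠ m j * p.1 + b j} := by
  intro p hp j
  have := hp j
  cases hε : ε j <;> simp [hε] at this <;> intro h <;> linarith

lemma component_eq_cell (m b : Fin k → ℝ) (ε : Fin k → Bool) (p : ℝ × ℝ)
    (hp : p ∈ cellOf m b ε) :
    connectedComponentIn {q : ℝ × ℝ | ∀ j, q.2 ≠ m j * q.1 + b j} p = cellOf m b ε := by
  set C := {q : ℝ × ℝ | ∀ j, q.2 ≠ m j * q.1 + b j}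
  have hsub : cellOf m b ε ⊆ C := cellOf_subset_compl m b ε
  apply Set.Subset.antisymm
  · intro q hq
    intro j
    have hpre : IsPreconnected (connectedComponentIn C p) := isPreconnected_connectedComponentIn
    have hCsub : connectedComponentIn C p ⊆ C := connectedComponentIn_subset _ _
    have hcov : connectedComponentIn C p ⊆
        {r : ℝ × ℝ | m j * r.1 + b j < r.2} ∪ {r : ℝ × ℝ | r.2 < m j * r.1 + b j} := by
      intro r hr
      rcases lt_or_gt_of_ne (hCsub hr j) with h | h
      · right; exact h
      · left; exact h
    have hdisj : Disjoint {r : ℝ × ℝ | m j * r.1 + b j < r.2}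
        {r : ℝ × ℝ | r.2 < m j * r.1 + b j} := by
      rw [Set.disjoint_left]; intro r h1 h2; simp at h1 h2; linarith
    have hpmem : p ∈ connectedComponentIn C p := mem_connectedComponentIn (hsub hp)
    have hpj := hp j
    cases hε : ε j <;> rw [hε] at hpj <;> simp only [if_true, if_false, Bool.false_eq_true] at hpj
    · -- ε j = false : below
      have := IsPreconnected.subset_left_of_subset_union (isOpen_below (m j) (b j))
        (isOpen_above (m j) (b j)) hdisj.symm
        (by intro r hr; exact (hcov hr).symm) ⟨p, hpmem, hpj⟩ hpre
      simp [hε]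
      exact this hq
    · -- ε j = true : above
      have := IsPreconnected.subset_left_of_subset_union (isOpen_above (m j) (b j))
        (isOpen_below (m j) (b j)) hdisj hcov ⟨p, hpmem, hpj⟩ hpre
      simp [hε]
      exact this hq
  · exact ((cellOf_convex m b ε).isPreconnected).subset_connectedComponentIn hp hsub

end Stmt8Aux

namespace Stmt8Aux

open Filter

variable {k : ℕ}

lemma ray_mem (m b : Fin k → ℝ) (ε : Fin k → Bool) (σ μ : ℝ)
    (h : ∀ j, if ε j then 0 < σ * (μ - m j) else σ * (μ - m j) < 0) :
    ∀ᶠ t : ℝ in atTop, ((σ * t, σ * (μ * t)) : ℝ × ℝ) ∈ cellOf m b ε := by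
  have key : ∀ j : Fin k, ∀ᶠ t : ℝ in atTop,
      (if ε j then m j * (σ * t) + b j < σ * (μ * t)
       else σ * (μ * t) < m j * (σ * t) + b j) := by
    intro j
    have hj := h j
    cases hε : ε j <;> rw [hε] at hj <;>
      simp only [if_true, if_false, Bool.false_eq_true] at hj ⊢
    · have hpos : (0:ℝ) < -(σ * (μ - m j)) := by linarith
      have := (Tendsto.const_mul_atTop hpos tendsto_id).eventually_gt_atTop (-(b j))
      filter_upwards [this] with t ht
      have e : -(σ * (μ - m j)) * t = m j * (σ * t) - σ * (μ * t) := by ring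
      simp only [id] at ht
      linarith
    · have := (Tendsto.const_mul_atTop hj tendsto_id).eventually_gt_atTop (b j)
      filter_upwards [this] with t ht
      have e : σ * (μ - m j) * t = σ * (μ * t) - m j * (σ * t) := by ring
      simp only [id] at ht
      linarith
  have h2 := eventually_all.2 key
  filter_upwards [h2] with t ht
  intro j
  exact ht j

lemma not_bounded_of_ray (σ μ : ℝ) (hσ : σ = 1 ∨ σ = -1) (U : Set (ℝ × ℝ))
    (h : ∀ᶠ t : ℝ in atTop, ((σ * t, σ * (μ * t)) : ℝ × ℝ) ∈ U) :
    ¬ Bornology.IsBounded U := by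
  intro hb
  rw [isBounded_iff_forall_norm_le] at hb
  obtain ⟨C, hC⟩ := hb
  obtain ⟨t, ht⟩ := (h.and ((eventually_gt_atTop C).and (eventually_ge_atTop 0))).exists
  obtain ⟨h1, h2, h3⟩ := ht
  have hn := hC _ h1
  have : ‖((σ * t, σ * (μ * t)) : ℝ × ℝ)‖ ≥ |σ * t| := by
    rw [Prod.norm_def]
    exact le_max_of_le_left (le_of_eq (Real.norm_eq_abs _).symm)
  have habs : |σ * t| = t := by
    rcases hσ with rfl | rfl <;> simp [abs_mul, abs_of_nonneg h3]
  linarith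

lemma nonempty_of_ray (m b : Fin k → ℝ) (ε : Fin k → Bool) (σ μ : ℝ)
    (h : ∀ᶠ t : ℝ in atTop, ((σ * t, σ * (μ * t)) : ℝ × ℝ) ∈ cellOf m b ε) :
    (cellOf m b ε).Nonempty := by
  obtain ⟨t, ht⟩ := h.exists
  exact ⟨_, ht⟩

lemma bounded_aux (m1 m2 m3 c1 c2 c3 : ℝ) (h12 : m1 < m2) (h23 : m2 < m3) :
    Bornology.IsBounded {p : ℝ × ℝ |
      m1 * p.1 + c1 < p.2 ∧ p.2 < m2 * p.1 + c2 ∧ m3 * p.1 + c3 < p.2} := by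
  rw [isBounded_iff_forall_norm_le]
  set A := (c2 - c1) / (m1 - m2) with hA
  set B := (c2 - c3) / (m3 - m2) with hB
  set X := max |A| |B| with hX
  set Y := |m1| * X + |c1| + |m2| * X + |c2| with hY
  refine ⟨max X Y, ?_⟩
  rintro ⟨x, y⟩ ⟨hp1, hp2, hp3⟩
  simp only at hp1 hp2 hp3
  have hxA : A < x := by
    rw [hA, div_lt_iff_of_neg (by linarith : m1 - m2 < 0)]
    nlinarith
  have hxB : x < B := by
    rw [hB, lt_div_iff₀ (by linarith : (0:ℝ) < m3 - m2)]
    nlinarith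
  have hx : |x| ≤ X := by
    rw [abs_le]
    constructor
    · have := neg_abs_le A
      have := le_max_left |A| |B|
      linarith
    · have := le_abs_self B
      have := le_max_right |A| |B|
      linarith
  have hXnn : 0 ≤ X := le_trans (abs_nonneg A) (le_max_left _ _)
  have hm2x : m2 * x ≤ |m2| * X := by
    calc m2 * x ≤ |m2 * x| := le_abs_self _
    _ = |m2| * |x| := abs_mul _ _
    _ ≤ |m2| * X := mul_le_mul_of_nonneg_left hx (abs_nonneg _)
  have hm1x : -(|m1| * X) ≤ m1 * x := by
    have h1 : -(|m1 * x|) ≤ m1 * x := neg_abs_le _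
    have h2 : |m1 * x| = |m1| * |x| := abs_mul _ _
    have h3 : |m1| * |x| ≤ |m1| * X := mul_le_mul_of_nonneg_left hx (abs_nonneg _)
    linarith
  have hy : |y| ≤ Y := by
    rw [abs_le]
    have hc2 : c2 ≤ |c2| := le_abs_self _
    have hc1 : -(|c1|) ≤ c1 := neg_abs_le _
    have hnn1 : 0 ≤ |m1| * X := mul_nonneg (abs_nonneg _) hXnn
    have hnn2 : 0 ≤ |m2| * X := mul_nonneg (abs_nonneg _) hXnn
    have hnnc1 : 0 ≤ |c1| := abs_nonneg _
    have hnnc2 : 0 ≤ |c2| := abs_nonneg _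
    constructor <;> [skip; skip] <;> rw [hY] <;> linarith
  rw [Prod.norm_def]
  simp only [Real.norm_eq_abs]
  exact max_le (le_trans hx (le_max_left _ _)) (le_trans hy (le_max_right _ _))

lemma bounded_aux' (m1 m2 m3 c1 c2 c3 : ℝ) (h12 : m1 < m2) (h23 : m2 < m3) :
    Bornology.IsBounded {p : ℝ × ℝ |
      p.2 < m1 * p.1 + c1 ∧ m2 * p.1 + c2 < p.2 ∧ p.2 < m3 * p.1 + c3} := by
  have h := (bounded_aux m1 m2 m3 (-c1) (-c2) (-c3) h12 h23).neg
  apply h.subset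
  rintro ⟨x, y⟩ ⟨hp1, hp2, hp3⟩
  simp only at hp1 hp2 hp3
  rw [Set.mem_neg]
  refine ⟨by simp; linarith, by simp; linarith, by simp; linarith⟩

end Stmt8Aux

namespace Stmt8Aux

variable {k : ℕ}

lemma exists_mu (m : Fin k → ℝ) (hm : StrictMono m) (i : Fin k) :
    ∃ μ : ℝ, ∀ j, (j < i → m j < μ) ∧ (i ≤ j → μ < m j) := by
  by_cases h : ∃ j : Fin k, j < i
  · have hne : (Finset.univ.filter (fun j : Fin k => j < i)).Nonempty := by
      obtain ⟨j, hj⟩ := h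
      exact ⟨j, by simp [hj]⟩
    set i' := (Finset.univ.filter (fun j : Fin k => j < i)).max' hne with hi'
    have hi'lt : i' < i := by
      have := Finset.mem_filter.1 ((Finset.univ.filter (fun j : Fin k => j < i)).max'_mem hne)
      exact this.2
    refine ⟨(m i' + m i) / 2, fun j => ⟨fun hj => ?_, fun hj => ?_⟩⟩
    · have hle : j ≤ i' := Finset.le_max' _ _ (by simp [hj])
      have h1 : m j ≤ m i' := hm.monotone hle
      have h2 : m i' < m i := hm hi'lt
      linarith
    · have h1 : m i ≤ m j := hm.monotone hj
      have h2 : m i' < m i := hm hi'lt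
      linarith
  · push_neg at h
    refine ⟨m i - 1, fun j => ⟨fun hj => absurd hj (by simpa using h j), fun hj => ?_⟩⟩
    have := hm.monotone hj
    linarith

lemma threshold (hk : 1 ≤ k) (ε : Fin k → Bool)
    (h : ∀ a c d : Fin k, a < c → c < d → ε a = ε d → ε a = ε c) :
    ∃ i : Fin k, (∀ j, ε j = decide (i ≤ j)) ∨ (∀ j, ε j = decide (j < i)) := by
  by_cases hall : ∀ j, ε j = false
  · refine ⟨⟨0, hk⟩, Or.inr fun j => ?_⟩
    rw [hall j]
    simp [Fin.lt_def]
  · push_neg at hall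
    obtain ⟨j0, hj0⟩ := hall
    have hj0' : ε j0 = true := by simpa using hj0
    have hTne : (Finset.univ.filter (fun j : Fin k => ε j = true)).Nonempty :=
      ⟨j0, by simp [hj0']⟩
    set i := (Finset.univ.filter (fun j : Fin k => ε j = true)).min' hTne with hi
    have hiT : ε i = true := by
      have := (Finset.univ.filter (fun j : Fin k => ε j = true)).min'_mem hTne
      simpa using this
    have hmin : ∀ j, ε j = true → i ≤ j := fun j hj => Finset.min'_le _ _ (by simp [hj])
    by_cases h2 : ∀ j, i ≤ j → ε j = true
    · refine ⟨i, Or.inl fun j => ?_⟩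
      by_cases hij : i ≤ j
      · simp [h2 j hij, hij]
      · have : ε j = false := by
          cases hε : ε j
          · rfl
          · exact absurd (hmin j hε) hij
        simp [this, hij]
    · push_neg at h2
      obtain ⟨c, hic, hc⟩ := h2
      have hcf : ε c = false := by simpa using hc
      have hic' : i < c := lt_of_le_of_ne hic (by rintro rfl; rw [hiT] at hcf; simp at hcf)
      -- i is the least element of Fin k
      have hileast : ∀ j, i ≤ j := by
        intro j
        by_contra hji
        push_neg at hji
        have hjf : ε j = false := by
          cases hε : ε j
          · rfl
          · exact absurd (hmin j hε) (not_le.2 hji)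
        have := h j i c hji hic' (by rw [hjf, hcf])
        rw [hjf, hiT] at this
        simp at this
      have hFne : (Finset.univ.filter (fun j : Fin k => ε j = false)).Nonempty :=
        ⟨c, by simp [hcf]⟩
      set i' := (Finset.univ.filter (fun j : Fin k => ε j = false)).min' hFne with hi'
      have hi'F : ε i' = false := by
        have := (Finset.univ.filter (fun j : Fin k => ε j = false)).min'_mem hFne
        simpa using this
      have hmin' : ∀ j, ε j = false → i' ≤ j := fun j hj => Finset.min'_le _ _ (by simp [hj])
      have hii' : i < i' := lt_of_le_of_ne (hileast i')
        (by intro heq; rw [heq, hi'F] at hiT; simp at hiT)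
      refine ⟨i', Or.inr fun j => ?_⟩
      by_cases hj : j < i'
      · have : ε j = true := by
          cases hε : ε j
          · exact absurd (hmin' j hε) (not_le.2 hj)
          · rfl
        simp [this, hj]
      · push_neg at hj
        have hjf : ε j = false := by
          cases hε : ε j
          · rfl
          · -- ε j = true with i' ≤ j : bad triple i < i' < j? need i' < j
            have hj' : i' < j := lt_of_le_of_ne hj (by rintro rfl; rw [hε] at hi'F; simp at hi'F)
            have := h i i' j hii' hj' (by rw [hiT, hε])
            rw [hiT, hi'F] at this
            simp at this
        simp [hjf, not_lt.2 hj]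

lemma bad_triple_bounded (m b : Fin k → ℝ) (hm : StrictMono m) (ε : Fin k → Bool)
    (a c d : Fin k) (hac : a < c) (hcd : c < d) (had : ε a = ε d) (hne : ε a ≠ ε c) :
    Bornology.IsBounded (cellOf m b ε) := by
  cases hεa : ε a
  · -- ε a = false, ε c = true, ε d = false
    have hεc : ε c = true := by
      cases hε : ε c
      · exact absurd (by rw [hεa, hε]) hne
      · rfl
    have hεd : ε d = false := by rw [← had, hεa]
    apply (bounded_aux' (m a) (m c) (m d) (b a) (b c) (b d) (hm hac) (hm hcd)).subset
    intro p hp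
    have h1 := hp a; have h2 := hp c; have h3 := hp d
    rw [hεa] at h1; rw [hεc] at h2; rw [hεd] at h3
    simp only [if_true, if_false, Bool.false_eq_true] at h1 h2 h3
    exact ⟨h1, h2, h3⟩
  · -- ε a = true, ε c = false, ε d = true
    have hεc : ε c = false := by
      cases hε : ε c
      · rfl
      · exact absurd (by rw [hεa, hε]) hne
    have hεd : ε d = true := by rw [← had, hεa]
    apply (bounded_aux (m a) (m c) (m d) (b a) (b c) (b d) (hm hac) (hm hcd)).subset
    intro p hp
    have h1 := hp a; have h2 := hp c; have h3 := hp d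
    rw [hεa] at h1; rw [hεc] at h2; rw [hεd] at h3
    simp only [if_true, if_false, Bool.false_eq_true] at h1 h2 h3
    exact ⟨h1, h2, h3⟩

end Stmt8Aux


theorem stmt8 (k : ℕ) (hk : 1 ≤ k) (L : Fin k → ℝ × ℝ)
    (hslope : StrictMono fun i => (L i).1)
    (S : Finset (ℝ × ℝ × ℝ))
    (hS : S = Finset.image (fun i : Fin k => ((L i).1, (-1 : ℝ), -(L i).2)) Finset.univ)
    (Uplus Uminus : Fin k → Set (ℝ × ℝ))
    (hUp : ∀ i, Uplus i = {p | ∀ j : Fin k,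
      (j < i → p.2 < (L j).1 * p.1 + (L j).2) ∧ (i ≤ j → (L j).1 * p.1 + (L j).2 < p.2)})
    (hUm : ∀ i, Uminus i = {p | ∀ j : Fin k,
      (j < i → (L j).1 * p.1 + (L j).2 < p.2) ∧ (i ≤ j → p.2 < (L j).1 * p.1 + (L j).2)}) :
    (∀ i, IsUnboundedRegion S (Uplus i) ∧ IsUnboundedRegion S (Uminus i)) ∧
    (∀ i j, Uplus i = Uplus j → i = j) ∧
    (∀ i j, Uminus i = Uminus j → i = j) ∧
    (∀ i j, Uplus i ≠ Uminus j) ∧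
    (∀ U, IsUnboundedRegion S U → ∃ i, U = Uplus i ∨ U = Uminus i) := by
  have hC : (linesUnion S)ᶜ =
      {p : ℝ × ℝ | ∀ j, p.2 ≠ (L j).1 * p.1 + (L j).2} :=
    Stmt8Aux.compl_linesUnion (fun i => (L i).1) (fun i => (L i).2) S (by rw [hS])
  -- identification of Uplus/Uminus with cells
  have hUpc : ∀ i, Uplus i =
      Stmt8Aux.cellOf (fun i => (L i).1) (fun i => (L i).2) (fun j => decide (i ≤ j)) := by
    intro i
    rw [hUp i]
    ext p
    simp only [Stmt8Aux.cellOf, Set.mem_setOf_eq]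
    constructor
    · intro h j
      by_cases hij : i ≤ j
      · simpa [hij] using (h j).2 hij
      · simpa [hij] using (h j).1 (not_le.1 hij)
    · intro h j
      have := h j
      refine ⟨fun hj => ?_, fun hj => ?_⟩
      · rw [if_neg (by simp [not_le.2 hj])] at this; exact this
      · rw [if_pos (by simp [hj])] at this; exact this
  have hUmc : ∀ i, Uminus i =
      Stmt8Aux.cellOf (fun i => (L i).1) (fun i => (L i).2) (fun j => decide (j < i)) := by
    intro i
    rw [hUm i]
    ext p
    simp only [Stmt8Aux.cellOf, Set.mem_setOf_eq]
    constructor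
    · intro h j
      by_cases hij : j < i
      · simpa [hij] using (h j).1 hij
      · simpa [hij] using (h j).2 (not_lt.1 hij)
    · intro h j
      have := h j
      refine ⟨fun hj => ?_, fun hj => ?_⟩
      · rw [if_pos (by simp [hj])] at this; exact this
      · rw [if_neg (by simp [not_lt.2 hj])] at this; exact this
  -- each Uplus/Uminus is an unbounded region
  have hregUp : ∀ i, IsUnboundedRegion S (Uplus i) := by
    intro i
    obtain ⟨μ, hμ⟩ := Stmt8Aux.exists_mu (fun i => (L i).1) hslope i
    have hcond : ∀ j, if (fun j => decide (i ≤ j)) j then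
        0 < (-1 : ℝ) * (μ - (L j).1) else (-1 : ℝ) * (μ - (L j).1) < 0 := by
      intro j
      by_cases hij : i ≤ j
      · rw [if_pos (by simp [hij])]
        have := (hμ j).2 hij
        linarith
      · rw [if_neg (by simp [hij])]
        have := (hμ j).1 (not_le.1 hij)
        linarith
    have hray := Stmt8Aux.ray_mem (fun i => (L i).1) (fun i => (L i).2)
      (fun j => decide (i ≤ j)) (-1) μ hcond
    obtain ⟨t, hp⟩ := hray.exists
    constructor
    · refine ⟨((-1 : ℝ) * t, (-1 : ℝ) * (μ * t)), ?_, ?_⟩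
      · rw [hC]
        exact Stmt8Aux.cellOf_subset_compl _ _ _ hp
      · rw [hC, Stmt8Aux.component_eq_cell _ _ _ _ hp, hUpc i]
    · rw [hUpc i]
      exact Stmt8Aux.not_bounded_of_ray (-1) μ (Or.inr rfl) _ hray
  have hregUm : ∀ i, IsUnboundedRegion S (Uminus i) := by
    intro i
    obtain ⟨μ, hμ⟩ := Stmt8Aux.exists_mu (fun i => (L i).1) hslope i
    have hcond : ∀ j, if (fun j => decide (j < i)) j then
        0 < (1 : ℝ) * (μ - (L j).1) else (1 : ℝ) * (μ - (L j).1) < 0 := by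
      intro j
      by_cases hij : j < i
      · rw [if_pos (by simp [hij])]
        have := (hμ j).1 hij
        linarith
      · rw [if_neg (by simp [hij])]
        have := (hμ j).2 (not_lt.1 hij)
        linarith
    have hray := Stmt8Aux.ray_mem (fun i => (L i).1) (fun i => (L i).2)
      (fun j => decide (j < i)) 1 μ hcond
    obtain ⟨t, hp⟩ := hray.exists
    constructor
    · refine ⟨((1 : ℝ) * t, (1 : ℝ) * (μ * t)), ?_, ?_⟩
      · rw [hC]
        exact Stmt8Aux.cellOf_subset_compl _ _ _ hp
      · rw [hC, Stmt8Aux.component_eq_cell _ _ _ _ hp, hUmc i]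
    · rw [hUmc i]
      exact Stmt8Aux.not_bounded_of_ray 1 μ (Or.inl rfl) _ hray
  -- nonemptiness
  have hPne : ∀ i, ∃ p, p ∈ Uplus i := by
    intro i
    obtain ⟨⟨p, hp, hUe⟩, -⟩ := hregUp i
    exact ⟨p, hUe ▸ mem_connectedComponentIn hp⟩
  have hMne : ∀ i, ∃ p, p ∈ Uminus i := by
    intro i
    obtain ⟨⟨p, hp, hUe⟩, -⟩ := hregUm i
    exact ⟨p, hUe ▸ mem_connectedComponentIn hp⟩
  have hlast : ∀ i : Fin k, i ≤ ⟨k - 1, by omega⟩ := by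
    intro i
    rw [Fin.le_def]
    exact Nat.le_pred_of_lt i.isLt
  refine ⟨fun i => ⟨hregUp i, hregUm i⟩, ?_, ?_, ?_, ?_⟩
  · -- Uplus injective
    intro i j hij
    by_contra hne
    obtain ⟨p, hp⟩ := hPne i
    have hp' : p ∈ Uplus j := hij ▸ hp
    rw [hUp i] at hp
    rw [hUp j] at hp'
    rcases lt_or_gt_of_ne hne with h | h
    · have h1 := (hp i).2 le_rfl
      have h2 := (hp' i).1 h
      linarith
    · have h1 := (hp j).1 h
      have h2 := (hp' j).2 le_rfl
      linarith
  · -- Uminus injective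
    intro i j hij
    by_contra hne
    obtain ⟨p, hp⟩ := hMne i
    have hp' : p ∈ Uminus j := hij ▸ hp
    rw [hUm i] at hp
    rw [hUm j] at hp'
    rcases lt_or_gt_of_ne hne with h | h
    · have h1 := (hp i).2 le_rfl
      have h2 := (hp' i).1 h
      linarith
    · have h1 := (hp j).1 h
      have h2 := (hp' j).2 le_rfl
      linarith
  · -- Uplus ≠ Uminus
    intro i j heq
    obtain ⟨p, hp⟩ := hPne i
    have hp' : p ∈ Uminus j := heq ▸ hp
    rw [hUp i] at hp
    rw [hUm j] at hp'
    have h1 := (hp ⟨k - 1, by omega⟩).2 (hlast i)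
    have h2 := (hp' ⟨k - 1, by omega⟩).2 (hlast j)
    linarith
  · -- completeness
    intro U hU
    obtain ⟨⟨p, hpC, hUeq⟩, hunb⟩ := hU
    rw [hC] at hpC
    set ε : Fin k → Bool := fun j => decide ((L j).1 * p.1 + (L j).2 < p.2) with hε
    have hpcell : p ∈ Stmt8Aux.cellOf (fun i => (L i).1) (fun i => (L i).2) ε := by
      intro j
      by_cases hl : (L j).1 * p.1 + (L j).2 < p.2
      · rw [if_pos (by simp [hε, hl])]
        exact hl
      · rw [if_neg (by simp [hε, hl])]
        exact lt_of_le_of_ne (not_lt.1 hl) (hpC j)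
    have hUcell : U = Stmt8Aux.cellOf (fun i => (L i).1) (fun i => (L i).2) ε := by
      rw [hUeq, hC]
      exact Stmt8Aux.component_eq_cell _ _ ε p hpcell
    have hthresh : ∀ a c d : Fin k, a < c → c < d → ε a = ε d → ε a = ε c := by
      intro a c d h1 h2 h3
      by_contra hne
      apply hunb
      rw [hUcell]
      exact Stmt8Aux.bad_triple_bounded _ _ hslope ε a c d h1 h2 h3 hne
    obtain ⟨i, hi | hi⟩ := Stmt8Aux.threshold hk ε hthresh
    · refine ⟨i, Or.inl ?_⟩
      rw [hUcell, hUpc i]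
      exact congrArg _ (funext hi)
    · refine ⟨i, Or.inr ?_⟩
      rw [hUcell, hUmc i]
      exact congrArg _ (funext hi)
end

section
/- Let S be a spoke set for a point set P and let Q ⊆ P contain exactly one point in each unbounded region of the arrangement of S. Then every line of S is a halving line for Q, i.e., each open half-plane determined by a line of S contains exactly |Q|/2 points of Q. -/
section SpokeAux

open Set Filter

/-- Linear part of the side value. -/
def ip (l : ℝ × ℝ × ℝ) (d : ℝ × ℝ) : ℝ := l.1 * d.1 + l.2.1 * d.2

lemma continuous_sideVal (l : ℝ × ℝ × ℝ) : Continuous (sideVal l) := by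
  unfold sideVal; fun_prop

lemma continuous_ip (l : ℝ × ℝ × ℝ) : Continuous (ip l) := by
  unfold ip; fun_prop

lemma mem_linesUnion {S : Finset (ℝ × ℝ × ℝ)} {p : ℝ × ℝ} :
    p ∈ linesUnion S ↔ ∃ l ∈ S, sideVal l p = 0 := by
  simp [linesUnion, lineOf, sideVal, sub_eq_zero]

lemma sideVal_ne {S : Finset (ℝ × ℝ × ℝ)} {q : ℝ × ℝ} (hq : q ∉ linesUnion S)
    {l : ℝ × ℝ × ℝ} (hl : l ∈ S) : sideVal l q ≠ 0 := by
  intro h; exact hq (mem_linesUnion.mpr ⟨l, hl, h⟩)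

lemma sideVal_sub_smul (l : ℝ × ℝ × ℝ) (w d : ℝ × ℝ) (t : ℝ) :
    sideVal l (w - t • d) = sideVal l w - t * ip l d := by
  simp [sideVal, ip, Prod.smul_fst, Prod.smul_snd, smul_eq_mul]; ring

lemma sideVal_add_smul (l : ℝ × ℝ × ℝ) (w d : ℝ × ℝ) (t : ℝ) :
    sideVal l (w + t • d) = sideVal l w + t * ip l d := by
  simp [sideVal, ip, Prod.smul_fst, Prod.smul_snd, smul_eq_mul]; ring

lemma sideVal_combo (l : ℝ × ℝ × ℝ) (x y : ℝ × ℝ) {a b : ℝ} (hab : a + b = 1) :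
    sideVal l (a • x + b • y) = a * sideVal l x + b * sideVal l y := by
  simp [sideVal, Prod.smul_fst, Prod.smul_snd, smul_eq_mul]
  linear_combination (l.2.2) * hab

lemma sgn1 {x y c : ℝ} (h1 : 0 < x * y) (h2 : y * c < 0) : x * c < 0 := by
  rcases mul_pos_iff.mp h1 with ⟨hx, hy⟩ | ⟨hx, hy⟩ <;>
    rcases mul_neg_iff.mp h2 with ⟨ha, hb⟩ | ⟨ha, hb⟩
  · exact mul_neg_of_pos_of_neg hx hb
  · linarith
  · linarith
  · exact mul_neg_of_neg_of_pos hx hb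

lemma sgn2 {x y c : ℝ} (h2 : x * c < 0) (h3 : y * c < 0) : 0 < x * y := by
  rcases mul_neg_iff.mp h2 with ⟨hx, hc⟩ | ⟨hx, hc⟩ <;>
    rcases mul_neg_iff.mp h3 with ⟨hy, hc'⟩ | ⟨hy, hc'⟩
  · exact mul_pos hx hy
  · linarith
  · linarith
  · exact mul_pos_of_neg_of_neg hx hy

lemma ip_smul (l : ℝ × ℝ × ℝ) (r : ℝ) (v : ℝ × ℝ) : ip l (r • v) = r * ip l v := by
  simp [ip, Prod.smul_fst, Prod.smul_snd, smul_eq_mul]; ring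

lemma sideVal_eq_ip (l : ℝ × ℝ × ℝ) (p : ℝ × ℝ) : sideVal l p = ip l p - l.2.2 := rfl

/-- The open cell of the arrangement having the same sign vector as q. -/
def region (S : Finset (ℝ × ℝ × ℝ)) (q : ℝ × ℝ) : Set (ℝ × ℝ) :=
  {p | ∀ l ∈ S, 0 < sideVal l p * sideVal l q}

lemma region_subset {S : Finset (ℝ × ℝ × ℝ)} {q : ℝ × ℝ} :
    region S q ⊆ (linesUnion S)ᶜ := by
  intro p hp hmem
  obtain ⟨l, hl, h0⟩ := mem_linesUnion.mp hmem
  have := hp l hl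
  rw [h0] at this; simp at this

lemma mem_region_self {S : Finset (ℝ × ℝ × ℝ)} {q : ℝ × ℝ} (hq : q ∉ linesUnion S) :
    q ∈ region S q := by
  intro l hl
  exact mul_self_pos.mpr (sideVal_ne hq hl)

lemma region_convex (S : Finset (ℝ × ℝ × ℝ)) (q : ℝ × ℝ) : Convex ℝ (region S q) := by
  intro x hx y hy a b ha hb hab
  intro l hl
  have hx' := hx l hl
  have hy' := hy l hl
  have h : sideVal l (a • x + b • y) * sideVal l q
      = a * (sideVal l x * sideVal l q) + b * (sideVal l y * sideVal l q) := by
    rw [sideVal_combo l x y hab]; ring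
  rw [h]
  rcases eq_or_lt_of_le ha with h0 | h0
  · rw [← h0]; have hb1 : b = 1 := by linarith
    simpa [hb1] using hy'
  · exact add_pos_of_pos_of_nonneg (mul_pos h0 hx') (mul_nonneg hb hy'.le)

lemma sign_const {S : Finset (ℝ × ℝ × ℝ)} {F : Set (ℝ × ℝ)} (hF : IsPreconnected F)
    (hsub : F ⊆ (linesUnion S)ᶜ) {l : ℝ × ℝ × ℝ} (hl : l ∈ S)
    {x y : ℝ × ℝ} (hx : x ∈ F) (hy : y ∈ F) :
    0 < sideVal l x * sideVal l y := by
  have hne : ∀ z ∈ F, sideVal l z ≠ 0 := fun z hz h0 =>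
    hsub hz (mem_linesUnion.mpr ⟨l, hl, h0⟩)
  have himg : IsPreconnected (sideVal l '' F) :=
    hF.image _ (continuous_sideVal l).continuousOn
  by_contra h
  have hab : sideVal l x * sideVal l y < 0 :=
    lt_of_le_of_ne (not_lt.mp h) (mul_ne_zero (hne x hx) (hne y hy))
  have hoc := himg.ordConnected
  rcases mul_neg_iff.mp hab with ⟨ha, hb⟩ | ⟨ha, hb⟩
  · obtain ⟨z, hz, hz0⟩ := hoc.out ⟨y, hy, rfl⟩ ⟨x, hx, rfl⟩ ⟨hb.le, ha.le⟩
    exact hne z hz hz0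
  · obtain ⟨z, hz, hz0⟩ := hoc.out ⟨x, hx, rfl⟩ ⟨y, hy, rfl⟩ ⟨ha.le, hb.le⟩
    exact hne z hz hz0

lemma comp_eq_region {S : Finset (ℝ × ℝ × ℝ)} {q : ℝ × ℝ} (hq : q ∉ linesUnion S) :
    connectedComponentIn (linesUnion S)ᶜ q = region S q := by
  apply Set.Subset.antisymm
  · intro p hp l hl
    exact sign_const (isPreconnected_connectedComponentIn)
      (connectedComponentIn_subset _ _) hl hp (mem_connectedComponentIn hq)
  · exact (region_convex S q).isPreconnected.subset_connectedComponentIn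
      (mem_region_self hq) region_subset

lemma region_of_mem {S : Finset (ℝ × ℝ × ℝ)} {U : Set (ℝ × ℝ)}
    (hU : IsUnboundedRegion S U) {q : ℝ × ℝ} (hqU : q ∈ U) :
    q ∉ linesUnion S ∧ U = region S q ∧ ¬ Bornology.IsBounded (region S q) := by
  obtain ⟨⟨p, hp, hUeq⟩, hb⟩ := hU
  subst hUeq
  have hqc : q ∈ (linesUnion S)ᶜ := connectedComponentIn_subset _ _ hqU
  have heq := connectedComponentIn_eq hqU
  rw [heq, comp_eq_region hqc] at hb ⊢
  exact ⟨hqc, rfl, hb⟩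

lemma antipodal_exists {S : Finset (ℝ × ℝ × ℝ)}
    (hS0 : ∀ l ∈ S, (l.1, l.2.1) ≠ (0, 0))
    (hS1 : ∀ l ∈ S, ∀ m ∈ S, l ≠ m → l.1 * m.2.1 - l.2.1 * m.1 ≠ 0)
    {q : ℝ × ℝ} (hq : q ∉ linesUnion S)
    (hUnb : ¬ Bornology.IsBounded (region S q)) :
    ∃ q', q' ∉ linesUnion S ∧ (∀ l ∈ S, sideVal l q' * sideVal l q < 0) ∧
      IsUnboundedRegion S (region S q') := by
  -- Step 1: a sequence going to infinity in the region, and a limit direction d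
  have hseq : ∀ n : ℕ, ∃ p, p ∈ region S q ∧ (n : ℝ) < ‖p‖ := by
    intro n
    rw [isBounded_iff_forall_norm_le] at hUnb
    push_neg at hUnb
    obtain ⟨p, hp, hn⟩ := hUnb n
    exact ⟨p, hp, hn⟩
  choose x hxmem hxn using hseq
  have hpos : ∀ n, 0 < ‖x n‖ := fun n => lt_of_le_of_lt (Nat.cast_nonneg n) (hxn n)
  set u : ℕ → ℝ × ℝ := fun n => ‖x n‖⁻¹ • x n with hu_def
  have hu : ∀ n, u n ∈ Metric.sphere (0 : ℝ × ℝ) 1 := by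
    intro n
    rw [mem_sphere_zero_iff_norm, hu_def]
    simp [norm_smul, abs_of_pos (inv_pos.mpr (hpos n)), inv_mul_cancel₀ (hpos n).ne']
  obtain ⟨d, hd, φ, hφ, hconv⟩ := (isCompact_sphere (0 : ℝ × ℝ) 1).tendsto_subseq hu
  have hd1 : ‖d‖ = 1 := mem_sphere_zero_iff_norm.mp hd
  have hdne : d ≠ 0 := by intro h; rw [h] at hd1; simp at hd1
  -- Step 2: for every line, ip l d has the same (weak) sign as sideVal l q
  have hdir : ∀ l ∈ S, 0 ≤ ip l d * sideVal l q := by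
    intro l hl
    set c := sideVal l q with hc
    have h1 : ∀ n, ‖x n‖⁻¹ * (l.2.2 * c) ≤ ip l (u n) * c := by
      intro n
      have hm : 0 < sideVal l (x n) * c := hxmem n l hl
      have he : ip l (u n) * c = ‖x n‖⁻¹ * (sideVal l (x n) * c + l.2.2 * c) := by
        rw [hu_def]
        simp only [ip_smul]
        rw [sideVal_eq_ip]; ring
      rw [he]
      have hinv : 0 < ‖x n‖⁻¹ := inv_pos.mpr (hpos n)
      nlinarith
    have hnx : Tendsto (fun n => ‖x (φ n)‖) atTop atTop := by
      apply tendsto_atTop_mono (fun n => ?_) tendsto_natCast_atTop_atTop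
      calc (n : ℝ) ≤ (φ n : ℝ) := Nat.cast_le.mpr hφ.le_apply
        _ ≤ ‖x (φ n)‖ := (hxn (φ n)).le
    have hA : Tendsto (fun n => ‖x (φ n)‖⁻¹ * (l.2.2 * c)) atTop (nhds 0) := by
      have := hnx.inv_tendsto_atTop.mul_const (l.2.2 * c)
      simpa using this
    have hB : Tendsto (fun n => ip l (u (φ n)) * c) atTop (nhds (ip l d * c)) := by
      have hcont : Continuous fun v : ℝ × ℝ => ip l v * c := (continuous_ip l).mul continuous_const
      exact (hcont.tendsto d).comp hconv
    exact le_of_tendsto_of_tendsto' hA hB (fun n => h1 (φ n))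
  -- Step 3: at most one line perpendicular to d
  have hE : ∀ l ∈ S, ∀ m ∈ S, ip l d = 0 → ip m d = 0 → l = m := by
    intro l hl m hm h1 h2
    by_contra hne
    have hdet := hS1 l hl m hm hne
    have e1 : (l.1 * m.2.1 - l.2.1 * m.1) * d.1 = m.2.1 * (ip l d) - l.2.1 * (ip m d) := by
      simp [ip]; ring
    have e2 : (l.1 * m.2.1 - l.2.1 * m.1) * d.2 = l.1 * (ip m d) - m.1 * (ip l d) := by
      simp [ip]; ring
    rw [h1, h2] at e1 e2
    have e1' : (l.1 * m.2.1 - l.2.1 * m.1) * d.1 = 0 := e1.trans (by ring)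
    have e2' : (l.1 * m.2.1 - l.2.1 * m.1) * d.2 = 0 := e2.trans (by ring)
    have hd1' : d.1 = 0 := (mul_eq_zero.mp e1').resolve_left hdet
    have hd2' : d.2 = 0 := (mul_eq_zero.mp e2').resolve_left hdet
    exact hdne (by apply Prod.ext <;> simp [hd1', hd2'])
  -- Step 4: a base point w handling the (unique) perpendicular line
  have hw : ∃ w : ℝ × ℝ, ∀ l ∈ S, ip l d = 0 → sideVal l w * sideVal l q < 0 := by
    by_cases h : ∃ l₀ ∈ S, ip l₀ d = 0
    · obtain ⟨l₀, hl₀, hipl₀⟩ := h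
      set N := l₀.1 ^ 2 + l₀.2.1 ^ 2 with hN_def
      have hN : 0 < N := by
        have hne := hS0 l₀ hl₀
        rcases eq_or_ne l₀.1 0 with h1 | h1
        · have h2 : l₀.2.1 ≠ 0 := by
            intro h2; exact hne (Prod.ext h1 h2)
          have : 0 < l₀.2.1 ^ 2 := by positivity
          nlinarith [sq_nonneg l₀.1]
        · have : 0 < l₀.1 ^ 2 := by positivity
          nlinarith [sq_nonneg l₀.2.1]
      set c := sideVal l₀ q with hc
      have hcne : c ≠ 0 := sideVal_ne hq hl₀
      refine ⟨q + (-2 * c / N) • (l₀.1, l₀.2.1), ?_⟩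
      intro l hl hip
      have hll₀ : l = l₀ := hE l hl l₀ hl₀ hip hipl₀
      subst hll₀
      have hcalc : sideVal l (q + (-2 * c / N) • (l.1, l.2.1)) = -c := by
        rw [sideVal_add_smul]
        have : ip l (l.1, l.2.1) = N := by simp [ip, hN_def]; ring
        rw [this, ← hc]
        field_simp
        ring
      rw [hcalc, ← hc]
      nlinarith [mul_self_pos.mpr hcne]
    · push_neg at h
      exact ⟨q, fun l hl hip => absurd hip (h l hl)⟩
  obtain ⟨w, hwprop⟩ := hw
  -- Step 5: eventually w - t • d is on the opposite side of every line
  have hev : ∀ᶠ t : ℝ in atTop, ∀ l ∈ S, sideVal l (w - t • d) * sideVal l q < 0 := by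
    rw [eventually_all_finset]
    intro l hl
    have heq : ∀ t : ℝ, sideVal l (w - t • d) * sideVal l q
        = sideVal l w * sideVal l q - t * (ip l d * sideVal l q) := by
      intro t; rw [sideVal_sub_smul]; ring
    by_cases hip : ip l d = 0
    · have hneg := hwprop l hl hip
      filter_upwards with t
      rw [heq, hip]; simpa using hneg
    · have hb : 0 < ip l d * sideVal l q :=
        lt_of_le_of_ne (hdir l hl) (Ne.symm (mul_ne_zero hip (sideVal_ne hq hl)))
      filter_upwards [eventually_gt_atTop
        ((sideVal l w * sideVal l q) / (ip l d * sideVal l q))] with t ht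
      rw [heq]
      rw [div_lt_iff₀ hb] at ht
      linarith
  obtain ⟨t₀, ht₀⟩ := eventually_atTop.mp hev
  set q' := w - t₀ • d with hq'_def
  have hq'sign : ∀ l ∈ S, sideVal l q' * sideVal l q < 0 := ht₀ t₀ le_rfl
  have hq'L : q' ∉ linesUnion S := by
    intro hmem
    obtain ⟨l, hl, h0⟩ := mem_linesUnion.mp hmem
    have := hq'sign l hl
    rw [h0] at this; simp at this
  have hmemR : ∀ t, t₀ ≤ t → (w - t • d) ∈ region S q' := by
    intro t ht l hl
    exact sgn2 (ht₀ t ht l hl) (hq'sign l hl)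
  have hUnb' : ¬ Bornology.IsBounded (region S q') := by
    rw [isBounded_iff_forall_norm_le]
    rintro ⟨C, hC⟩
    set t := max t₀ (C + ‖w‖ + 1) with ht_def
    have h1 := hC _ (hmemR t (le_max_left _ _))
    have h2 : ‖t • d‖ - ‖w‖ ≤ ‖w - t • d‖ := by
      have h3 := norm_sub_norm_le (t • d) w
      rw [norm_sub_rev (t • d) w] at h3
      exact h3
    rw [norm_smul, hd1, Real.norm_eq_abs, mul_one] at h2
    have h4 : t ≤ |t| := le_abs_self t
    have h5 : C + ‖w‖ + 1 ≤ t := le_max_right _ _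
    linarith
  exact ⟨q', hq'L, hq'sign,
    ⟨⟨q', hq'L, (comp_eq_region hq'L).symm⟩, hUnb'⟩⟩

end SpokeAux


theorem stmt9 (P Q : Finset (ℝ × ℝ)) (S : Finset (ℝ × ℝ × ℝ))
    (hS : SpokeSet P S) (hQP : Q ⊆ P)
    (hQ1 : ∀ U, IsUnboundedRegion S U → ∃! q, q ∈ Q ∧ q ∈ U)
    (hQ2 : ∀ q ∈ Q, ∃ U, IsUnboundedRegion S U ∧ q ∈ U) :
    ∀ l ∈ S, (Q.filter fun p => sideVal l p < 0).card = Q.card / 2 ∧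
      (Q.filter fun p => 0 < sideVal l p).card = Q.card / 2 := by
  classical
  have hne : ∀ q ∈ Q, ∀ l ∈ S, sideVal l q ≠ 0 := by
    intro q hq l hl
    obtain ⟨U, hU, hqU⟩ := hQ2 q hq
    exact sideVal_ne (region_of_mem hU hqU).1 hl
  have key : ∀ q ∈ Q, ∃ q', (q' ∈ Q ∧ ∀ m ∈ S, sideVal m q' * sideVal m q < 0) ∧
      ∀ q'' ∈ Q, (∀ m ∈ S, sideVal m q'' * sideVal m q < 0) → q'' = q' := by
    intro q hq
    obtain ⟨U, hU, hqU⟩ := hQ2 q hq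
    obtain ⟨hqL, hUeq, hUnb⟩ := region_of_mem hU hqU
    obtain ⟨q₁, hq₁L, hq₁sign, hq₁reg⟩ := antipodal_exists hS.1 hS.2.1 hqL hUnb
    obtain ⟨q', ⟨hq'Q, hq'mem⟩, huniq⟩ := hQ1 _ hq₁reg
    refine ⟨q', ⟨hq'Q, ?_⟩, ?_⟩
    · intro m hm
      exact sgn1 (hq'mem m hm) (hq₁sign m hm)
    · intro q'' hq''Q hsign
      refine huniq q'' ⟨hq''Q, ?_⟩
      intro m hm
      exact sgn2 (hsign m hm) (hq₁sign m hm)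
  have key' : ∀ q : ℝ × ℝ, ∃ q', q ∈ Q → (q' ∈ Q ∧ ∀ m ∈ S, sideVal m q' * sideVal m q < 0) ∧
      ∀ q'' ∈ Q, (∀ m ∈ S, sideVal m q'' * sideVal m q < 0) → q'' = q' := by
    intro q
    by_cases h : q ∈ Q
    · obtain ⟨q', h'⟩ := key q h
      exact ⟨q', fun _ => h'⟩
    · exact ⟨q, fun h' => absurd h' h⟩
  choose f hf using key'
  have hfQ : ∀ q ∈ Q, f q ∈ Q := fun q hq => ((hf q hq).1).1
  have hfsign : ∀ q ∈ Q, ∀ m ∈ S, sideVal m (f q) * sideVal m q < 0 :=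
    fun q hq => ((hf q hq).1).2
  have hinv : ∀ q ∈ Q, f (f q) = q := by
    intro q hq
    have h1 := hfQ q hq
    have h2 : ∀ m ∈ S, sideVal m q * sideVal m (f q) < 0 := by
      intro m hm
      have := hfsign q hq m hm
      linarith [mul_comm (sideVal m (f q)) (sideVal m q)]
    exact ((hf (f q) h1).2 q hq h2).symm
  intro l hl
  have hcard : (Q.filter fun p => sideVal l p < 0).card
      = (Q.filter fun p => 0 < sideVal l p).card := by
    apply Finset.card_bij' (fun a _ => f a) (fun b _ => f b)
    · intro a ha
      rw [Finset.mem_filter] at ha ⊢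
      refine ⟨hfQ a ha.1, ?_⟩
      have := hfsign a ha.1 l hl
      nlinarith [ha.2]
    · intro b hb
      rw [Finset.mem_filter] at hb ⊢
      refine ⟨hfQ b hb.1, ?_⟩
      have := hfsign b hb.1 l hl
      nlinarith [hb.2]
    · intro a ha
      exact hinv a (Finset.mem_filter.mp ha).1
    · intro b hb
      exact hinv b (Finset.mem_filter.mp hb).1
  have hsum : (Q.filter fun p => sideVal l p < 0).card
      + (Q.filter fun p => 0 < sideVal l p).card = Q.card := by
    have heq : (Q.filter fun p => 0 < sideVal l p)
        = Q.filter fun p => ¬ sideVal l p < 0 := by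
      apply Finset.filter_congr
      intro q hq
      have h := hne q hq l hl
      constructor
      · intro h1; exact not_lt.mpr h1.le
      · intro h1
        simp only [not_lt] at h1
        exact lt_of_le_of_ne h1 (Ne.symm h)
    rw [heq]
    exact Finset.card_filter_add_card_filter_not _
  constructor <;> omega
end

section
/- In a spoke matching arising from a spoke set, every edge of the matching intersects every line of the spoke set. -/
theorem stmt10 (P : Finset (ℝ × ℝ)) (S : Finset (ℝ × ℝ × ℝ))
    (M : Finset ((ℝ × ℝ) × (ℝ × ℝ))) (hM : SpokeMatching P S M) :
    ∀ e ∈ M, ∀ l ∈ S, ∃ x ∈ segment ℝ e.1 e.2, x ∈ lineOf l := by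
  intro e he l hl
  obtain ⟨_, _, _, hA⟩ := hM
  obtain ⟨U, V, ⟨_, _, hside⟩, hU, hV⟩ := hA e he
  have key : sideVal l e.1 * sideVal l e.2 < 0 := hside l hl e.1 hU e.2 hV
  set a := sideVal l e.1 with ha
  set b := sideVal l e.2 with hb
  have hab : a - b ≠ 0 := by
    intro h
    have hab2 : a = b := by linarith
    rw [hab2] at key
    nlinarith [mul_self_nonneg b]
  set t : ℝ := a / (a - b) with ht
  have h0 : 0 ≤ t := by
    rcases mul_neg_iff.mp key with ⟨ha', hb'⟩ | ⟨ha', hb'⟩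
    · exact div_nonneg ha'.le (by linarith)
    · rw [ht, div_nonneg_iff]; exact Or.inr ⟨ha'.le, by linarith⟩
  have h1 : t ≤ 1 := by
    rcases mul_neg_iff.mp key with ⟨ha', hb'⟩ | ⟨ha', hb'⟩
    · rw [div_le_one (by linarith)]; linarith
    · rw [div_le_one_of_neg (by linarith)]; linarith
  refine ⟨(1 - t) • e.1 + t • e.2, ⟨1 - t, t, by linarith, h0, by ring, rfl⟩, ?_⟩
  have hts : t * (a - b) = a := div_mul_cancel₀ a hab
  simp only [lineOf, Set.mem_setOf_eq, Prod.fst_add, Prod.snd_add, Prod.smul_fst,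
    Prod.smul_snd, smul_eq_mul]
  simp only [sideVal] at ha hb hts
  nlinarith [hts]
end

section
/- Let A and B be disjoint finite planar point sets with A avoiding B and separated by a vertical line ℓ with A to the left of ℓ. Then in the dual line arrangement of A ∪ B, every line dual to a point of B intersects the lines dual to points of A in the same left-to-right order. -/
theorem stmt18 (A B : Finset (ℝ × ℝ)) (hdisj : Disjoint A B)
    (hav : Avoids A B) (c : ℝ)
    (hA : ∀ a ∈ A, a.1 < c) (hB : ∀ b ∈ B, c < b.1) :
    ∀ b₁ ∈ B, ∀ b₂ ∈ B, ∀ a₁ ∈ A, ∀ a₂ ∈ A, a₁ ≠ a₂ →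
      ((a₁.2 - b₁.2) / (a₁.1 - b₁.1) < (a₂.2 - b₁.2) / (a₂.1 - b₁.1) ↔
       (a₁.2 - b₂.2) / (a₁.1 - b₂.1) < (a₂.2 - b₂.2) / (a₂.1 - b₂.1)) := by
  intro b₁ hb₁ b₂ hb₂ a₁ ha₁ a₂ ha₂ h12
  set f : (ℝ × ℝ) → ℝ :=
    fun x => (a₂.2 - x.2) * (a₁.1 - x.1) - (a₁.2 - x.2) * (a₂.1 - x.1) with hf
  -- any point with f x = 0 lies on the line through a₁, a₂
  have hline : ∀ x : ℝ × ℝ, f x = 0 → x ∈ (affineSpan ℝ {a₁, a₂} : Set (ℝ × ℝ)) := by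
    intro x hx
    have hne : a₂.1 - a₁.1 ≠ 0 ∨ a₂.2 - a₁.2 ≠ 0 := by
      by_contra h
      push_neg at h
      exact h12 (Prod.ext (by linarith [h.1]) (by linarith [h.2])).symm
    simp only [hf] at hx
    rcases hne with hd | hd
    · have hxeq : x = ((x.1 - a₁.1) / (a₂.1 - a₁.1)) • (a₂ - a₁) + a₁ := by
        apply Prod.ext
        · simp [Prod.smul_fst]; field_simp; ring
        · simp [Prod.smul_snd]; field_simp; nlinarith [hx]
      rw [hxeq]
      exact smul_vsub_vadd_mem_affineSpan_pair _ a₁ a₂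
    · have hxeq : x = ((x.2 - a₁.2) / (a₂.2 - a₁.2)) • (a₂ - a₁) + a₁ := by
        apply Prod.ext
        · simp [Prod.smul_fst]; field_simp; nlinarith [hx]
        · simp [Prod.smul_snd]; field_simp; ring
      rw [hxeq]
      exact smul_vsub_vadd_mem_affineSpan_pair _ a₁ a₂
  -- f never vanishes on the convex hull of B
  have hsign : ∀ x ∈ convexHull ℝ (B : Set (ℝ × ℝ)), f x ≠ 0 := by
    intro x hx hfx
    exact hav a₁ ha₁ a₂ ha₂ h12 x (hline x hfx) hx
  have hb₁' : (b₁ : ℝ × ℝ) ∈ convexHull ℝ (B : Set (ℝ × ℝ)) := subset_convexHull ℝ _ hb₁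
  have hb₂' : (b₂ : ℝ × ℝ) ∈ convexHull ℝ (B : Set (ℝ × ℝ)) := subset_convexHull ℝ _ hb₂
  -- no opposite signs
  have hopp : ∀ u ∈ convexHull ℝ (B : Set (ℝ × ℝ)), ∀ v ∈ convexHull ℝ (B : Set (ℝ × ℝ)),
      0 < f u → f v < 0 → False := by
    intro u hu v hv hfu hfv
    set t : ℝ := f u / (f u - f v) with ht
    have hd : 0 < f u - f v := by linarith
    have ht0 : 0 ≤ t := div_nonneg (le_of_lt hfu) (le_of_lt hd)
    have ht1 : t ≤ 1 := by
      rw [div_le_one hd]; linarith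
    set p : ℝ × ℝ := (1 - t) • u + t • v with hp
    have hpmem : p ∈ convexHull ℝ (B : Set (ℝ × ℝ)) :=
      (convex_convexHull ℝ _) hu hv (by linarith) ht0 (by ring)
    have hfp : f p = 0 := by
      have : f p = (1 - t) * f u + t * f v := by
        simp only [hf, hp, Prod.fst_add, Prod.snd_add, Prod.smul_fst, Prod.smul_snd,
          smul_eq_mul]
        ring
      rw [this, ht]
      field_simp
      ring
    exact hsign p hpmem hfp
  have hsame : (0 < f b₁) ↔ (0 < f b₂) := by
    rcases lt_trichotomy (f b₁) 0 with h1 | h1 | h1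
    · rcases lt_trichotomy (f b₂) 0 with h2 | h2 | h2
      · constructor <;> intro h <;> linarith
      · exact absurd h2 (hsign b₂ hb₂')
      · exact absurd (hopp b₂ hb₂' b₁ hb₁' h2 h1) (fun h => h)
    · exact absurd h1 (hsign b₁ hb₁')
    · rcases lt_trichotomy (f b₂) 0 with h2 | h2 | h2
      · exact absurd (hopp b₁ hb₁' b₂ hb₂' h1 h2) (fun h => h)
      · exact absurd h2 (hsign b₂ hb₂')
      · constructor <;> intro h <;> linarith
  -- translate slope inequality to sign of f
  have key : ∀ b ∈ B, ((a₁.2 - b.2) / (a₁.1 - b.1) < (a₂.2 - b.2) / (a₂.1 - b.1) ↔ 0 < f b) := by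
    intro b hb
    have h1 : a₁.1 - b.1 < 0 := by have := hA a₁ ha₁; have := hB b hb; linarith
    have h2 : a₂.1 - b.1 < 0 := by have := hA a₂ ha₂; have := hB b hb; linarith
    have e1 : (a₁.2 - b.2) / (a₁.1 - b.1) = (b.2 - a₁.2) / (b.1 - a₁.1) := by
      rw [← neg_div_neg_eq]; ring_nf
    have e2 : (a₂.2 - b.2) / (a₂.1 - b.1) = (b.2 - a₂.2) / (b.1 - a₂.1) := by
      rw [← neg_div_neg_eq]; ring_nf
    rw [e1, e2, div_lt_div_iff₀ (by linarith) (by linarith)]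
    constructor <;> intro h <;> simp only [hf] at * <;> nlinarith
  rw [key b₁ hb₁, key b₂ hb₂]
  exact hsame
end
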